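/- Let 𝒜 be a commutative matrix *-algebra of n×n complex matrices, and let V ⊆ ℂⁿ be a linear subspace that is 𝒜-invariant, i.e. A·v ∈ V for every A ∈ 𝒜 and v ∈ V. Then V has an orthonormal basis (with respect to the standard inner product on ℂⁿ) consisting of common eigenvectors of 𝒜: each basis vector v satisfies that for every A ∈ 𝒜 there exists λ ∈ ℂ with A·v = λ·v. -/

import Mathlib

set_option maxHeartbeats 1000000


open Matrix

/-- given a commutative matrix *-algebra `𝒜 ⊆ ℂ^{n×n}` and an `𝒜`-invariant
subspace `V ⊆ ℂⁿ`, the subspace `V` has an orthonormal basis (for the standard inner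
product on `ℂⁿ`) consisting of common eigenvectors of `𝒜`. -/
theorem statement1 (n : ℕ) (A : Set (Matrix (Fin n) (Fin n) ℂ))
    (hne : A.Nonempty)
    (hadd : ∀ M ∈ A, ∀ N ∈ A, M + N ∈ A)
    (hsmul : ∀ (c : ℂ), ∀ M ∈ A, c • M ∈ A)
    (hmul : ∀ M ∈ A, ∀ N ∈ A, M * N ∈ A)
    (hstar : ∀ M ∈ A, Mᴴ ∈ A)
    (hcomm : ∀ M ∈ A, ∀ N ∈ A, M * N = N * M)
    (V : Submodule ℂ (EuclideanSpace ℂ (Fin n)))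
    (hinv : ∀ M ∈ A, ∀ v ∈ V, WithLp.toLp 2 (M.mulVec v) ∈ V) :
    ∃ b : OrthonormalBasis (Fin (Module.finrank ℂ V)) ℂ V,
      ∀ i, ∀ M ∈ A, ∃ lam : ℂ,
        M.mulVec ((b i : V) : EuclideanSpace ℂ (Fin n))
          = lam • ((b i : V) : EuclideanSpace ℂ (Fin n)) := by
  letI : DecidableEq ((Fin (Module.finrank ℂ (↥(Submodule.span ℂ A))) × Bool) → ℂ) := Classical.decEq _
  set S : Submodule ℂ (Matrix (Fin n) (Fin n) ℂ) := Submodule.span ℂ A with hSdef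
  -- invariance of V under S
  have hSinv : ∀ M ∈ S, ∀ v ∈ V, WithLp.toLp 2 (M.mulVec v) ∈ V := by
    intro M hM
    induction hM using Submodule.span_induction with
    | mem x h => exact hinv x h
    | zero => intro v hv; simpa [Matrix.zero_mulVec] using V.zero_mem
    | add x y hx hy px py =>
        intro v hv
        simpa [Matrix.add_mulVec] using V.add_mem (px v hv) (py v hv)
    | smul a x hx px =>
        intro v hv
        simpa [Matrix.smul_mulVec] using V.smul_mem a (px v hv)
  -- commutativity on S
  have hScomm : ∀ M ∈ S, ∀ N ∈ S, M * N = N * M := by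
    intro M hM N hN
    induction hM, hN using Submodule.span_induction₂ with
    | mem_mem x y hx hy => exact hcomm x hx y hy
    | zero_left y hy => simp
    | zero_right x hx => simp
    | add_left x y z hx hy hz h1 h2 => rw [add_mul, mul_add, h1, h2]
    | add_right x y z hx hy hz h1 h2 => rw [mul_add, add_mul, h1, h2]
    | smul_left a x y hx hy h => rw [smul_mul_assoc, mul_smul_comm, h]
    | smul_right a x y hx hy h => rw [smul_mul_assoc, mul_smul_comm, h]
  -- star closure of S
  have hSstar : ∀ M ∈ S, Mᴴ ∈ S := by
    intro M hM
    induction hM using Submodule.span_induction with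
    | mem x h => exact Submodule.subset_span (hstar x h)
    | zero => simpa using S.zero_mem
    | add x y hx hy px py => simpa [Matrix.conjTranspose_add] using S.add_mem px py
    | smul a x hx px =>
        rw [Matrix.conjTranspose_smul]
        exact S.smul_mem _ px
  haveI : FiniteDimensional ℂ (↥V) := inferInstance
  letI instN : NormedAddCommGroup (↥V) := inferInstance
  letI instI : InnerProductSpace ℂ (↥V) := inferInstance
  set d := Module.finrank ℂ (↥S) with hd
  set B : Module.Basis (Fin d) ℂ (↥S) := Module.finBasis ℂ (↥S) with hB
  -- Hermitian generators
  set C : Fin d × Bool → Matrix (Fin n) (Fin n) ℂ := fun i =>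
    if i.2 then (-(Complex.I)/2) • ((B i.1 : Matrix (Fin n) (Fin n) ℂ) - (B i.1 : Matrix (Fin n) (Fin n) ℂ)ᴴ)
    else ((1:ℂ)/2) • ((B i.1 : Matrix (Fin n) (Fin n) ℂ) + (B i.1 : Matrix (Fin n) (Fin n) ℂ)ᴴ) with hC
  have hCS : ∀ i, C i ∈ S := by
    intro i
    have h1 : (B i.1 : Matrix (Fin n) (Fin n) ℂ) ∈ S := (B i.1).2
    have h2 := hSstar _ h1
    rcases i with ⟨j, b⟩
    cases b <;> simp only [hC, if_true, if_false, Bool.false_eq_true]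
    · exact S.smul_mem _ (S.add_mem h1 h2)
    · exact S.smul_mem _ (S.sub_mem h1 h2)
  have hCH : ∀ i, (C i).IsHermitian := by
    intro ⟨j, b⟩
    set X := (B j : Matrix (Fin n) (Fin n) ℂ) with hX
    cases b
    · show (((1:ℂ)/2) • (X + Xᴴ)).IsHermitian
      unfold Matrix.IsHermitian
      rw [Matrix.conjTranspose_smul, Matrix.conjTranspose_add, Matrix.conjTranspose_conjTranspose]
      simp [add_comm]
    · show ((-(Complex.I)/2) • (X - Xᴴ)).IsHermitian
      unfold Matrix.IsHermitian
      rw [Matrix.conjTranspose_smul, Matrix.conjTranspose_sub, Matrix.conjTranspose_conjTranspose]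
      have h1 : (starRingEnd ℂ) (-(Complex.I)/2) = Complex.I/2 := by
        rw [map_div₀, map_neg, Complex.conj_I, map_ofNat]
        ring
      rw [show (star (-(Complex.I)/2) : ℂ) = Complex.I/2 from h1,
        show Xᴴ - X = -(X - Xᴴ) from (neg_sub X Xᴴ).symm, smul_neg, ← neg_smul]
      congr 1
      ring
  have hBdec : ∀ j : Fin d, (B j : Matrix (Fin n) (Fin n) ℂ) = C (j, false) + Complex.I • C (j, true) := by
    intro j
    set X := (B j : Matrix (Fin n) (Fin n) ℂ) with hX
    show X = ((1:ℂ)/2) • (X + Xᴴ) + Complex.I • ((-(Complex.I)/2) • (X - Xᴴ))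
    rw [smul_smul]
    have : Complex.I * (-(Complex.I)/2) = (1:ℂ)/2 := by
      field_simp
      simp [Complex.I_sq]
    rw [this]
    module
  -- the family of restricted symmetric operators
  set T : Fin d × Bool → Module.End ℂ (↥V) := fun i =>
    (Matrix.toEuclideanLin (C i)).restrict (fun v hv => hSinv _ (hCS i) v hv) with hT
  have hTsym : ∀ i, (T i).IsSymmetric := fun i =>
    (Matrix.isHermitian_iff_isSymmetric.mp (hCH i)).restrict_invariant _
  have hTmul : ∀ (p q : Fin d × Bool) (x : ↥V),
      (((T p * T q) x : ↥V) : EuclideanSpace ℂ (Fin n)) = WithLp.toLp 2 ((C p * C q).mulVec x) := by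
    intro p q x
    calc (((T p) ((T q) x) : ↥V) : EuclideanSpace ℂ (Fin n))
        = Matrix.toEuclideanLin (C p) (((T q) x : ↥V) : EuclideanSpace ℂ (Fin n)) :=
          LinearMap.restrict_coe_apply _ _ _
      _ = Matrix.toEuclideanLin (C p) (Matrix.toEuclideanLin (C q) (x : EuclideanSpace ℂ (Fin n))) := rfl
      _ = WithLp.toLp 2 ((C p).mulVec ((C q).mulVec (x : EuclideanSpace ℂ (Fin n)))) := rfl
      _ = WithLp.toLp 2 ((C p * C q).mulVec (x : EuclideanSpace ℂ (Fin n))) := by rw [Matrix.mulVec_mulVec]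
  have hTcomm : Pairwise (Function.onFun Commute T) := by
    intro p q _
    show T p * T q = T q * T p
    refine LinearMap.ext fun x => Subtype.ext ?_
    rw [hTmul, hTmul, hScomm _ (hCS p) _ (hCS q)]
  have htop := LinearMap.IsSymmetric.iSup_iInf_eq_top_of_commute hTsym hTcomm
  have horth := LinearMap.IsSymmetric.orthogonalFamily_iInf_eigenspaces hTsym
  set F : ((Fin d × Bool) → ℂ) → Submodule ℂ (↥V) :=
    fun χ => ⨅ i, Module.End.eigenspace (T i) (χ i) with hF
  haveI : Fintype {χ : (Fin d × Bool) → ℂ // F χ ≠ ⊥} :=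
    (horth.independent).fintypeNeBotOfFiniteDimensional
  set A' : {χ : (Fin d × Bool) → ℂ // F χ ≠ ⊥} → Submodule ℂ (↥V) := fun χ => F χ.1 with hA'
  have horth' : OrthogonalFamily ℂ (fun χ => A' χ) (fun χ => (A' χ).subtypeₗᵢ) :=
    horth.comp Subtype.val_injective
  have hsup : ⨆ χ, A' χ = ⊤ := by
    apply le_antisymm le_top
    rw [← htop]
    apply iSup_le
    intro χ
    by_cases h : F χ = ⊥
    · rw [h]; exact bot_le
    · exact le_iSup_of_le ⟨χ, h⟩ le_rfl
  have hint : DirectSum.IsInternal A' :=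
    horth'.isInternal_iff.mpr (by rw [hsup, Submodule.top_orthogonal_eq_bot])
  set b0 := hint.collectedOrthonormalBasis horth' (fun χ => stdOrthonormalBasis ℂ (A' χ)) with hb0
  have hcard : Fintype.card (Σ χ : {χ : (Fin d × Bool) → ℂ // F χ ≠ ⊥},
      Fin (Module.finrank ℂ (A' χ))) = Module.finrank ℂ (↥V) :=
    (Module.finrank_eq_card_basis b0.toBasis).symm
  set e := Fintype.equivFinOfCardEq hcard with he
  refine ⟨b0.reindex e, ?_⟩
  intro idx M hM
  set a := e.symm idx with ha
  have hbi : ((b0.reindex e) idx : ↥V) = b0 a := by rw [b0.reindex_apply]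
  set v : EuclideanSpace ℂ (Fin n) := ((b0 a : ↥V) : EuclideanSpace ℂ (Fin n)) with hv
  have hmem : b0 a ∈ A' a.1 :=
    hint.collectedOrthonormalBasis_mem horth' (fun χ => stdOrthonormalBasis ℂ (A' χ)) a
  have heig : ∀ i0 : Fin d × Bool, (C i0).mulVec v = (a.1.1 i0) • v := by
    intro i0
    have h1 : b0 a ∈ Module.End.eigenspace (T i0) (a.1.1 i0) :=
      (Submodule.mem_iInf _).mp hmem i0
    have h2 : (T i0) (b0 a) = (a.1.1 i0) • (b0 a) := Module.End.mem_eigenspace_iff.mp h1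
    suffices hs : WithLp.toLp 2 ((C i0).mulVec v) = (a.1.1 i0) • v from congrArg WithLp.ofLp hs
    calc WithLp.toLp 2 ((C i0).mulVec v) = Matrix.toEuclideanLin (C i0) v := rfl
      _ = (((T i0) (b0 a) : ↥V) : EuclideanSpace ℂ (Fin n)) :=
          (LinearMap.restrict_coe_apply _ _ _).symm
      _ = (((a.1.1 i0) • (b0 a) : ↥V) : EuclideanSpace ℂ (Fin n)) := by rw [h2]
      _ = (a.1.1 i0) • v := rfl
  have heigB : ∀ j : Fin d, (B j : Matrix (Fin n) (Fin n) ℂ).mulVec v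
      = (a.1.1 (j, false) + Complex.I * a.1.1 (j, true)) • v := by
    intro j
    rw [hBdec j, Matrix.add_mulVec, Matrix.smul_mulVec, heig, heig, smul_smul, ← add_smul]
  have hMS : M ∈ S := Submodule.subset_span hM
  set c := B.repr ⟨M, hMS⟩ with hc
  have hrep : M = ∑ j, c j • (B j : Matrix (Fin n) (Fin n) ℂ) := by
    have h3 := congrArg (Subtype.val) (B.sum_repr ⟨M, hMS⟩)
    simp only [Submodule.coe_sum, Submodule.coe_smul] at h3
    exact h3.symm
  refine ⟨∑ j, c j * (a.1.1 (j, false) + Complex.I * a.1.1 (j, true)), ?_⟩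
  have hfinal : M.mulVec v = ∑ j, c j • ((B j : Matrix (Fin n) (Fin n) ℂ).mulVec v) := by
    calc M.mulVec v = Matrix.toLin' M v := (Matrix.toLin'_apply _ _).symm
      _ = Matrix.toLin' (∑ j, c j • (B j : Matrix (Fin n) (Fin n) ℂ)) v := by rw [← hrep]
      _ = (∑ j, c j • Matrix.toLin' (B j : Matrix (Fin n) (Fin n) ℂ)) v := by
          rw [map_sum]
          simp only [_root_.map_smul]
      _ = ∑ j, c j • ((B j : Matrix (Fin n) (Fin n) ℂ).mulVec v) := by
          rw [LinearMap.sum_apply]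
          simp only [LinearMap.smul_apply, Matrix.toLin'_apply]
  rw [hbi, ← hv, hfinal]
  calc ∑ j, c j • ((B j : Matrix (Fin n) (Fin n) ℂ).mulVec v)
      = ∑ j, (c j * (a.1.1 (j, false) + Complex.I * a.1.1 (j, true))) • WithLp.ofLp v := by
        refine Finset.sum_congr rfl fun j _ => ?_
        rw [heigB j, smul_smul]
    _ = (∑ j, c j * (a.1.1 (j, false) + Complex.I * a.1.1 (j, true))) • WithLp.ofLp v := by
        rw [Finset.sum_smul]
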